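/- Let G be a finite group, n ≥ 1, H_1, …, H_n subgroups of G, and χ the character of an irreducible complex representation of G of dimension d. Then Σ over all tuples (x_1, …, x_n, z_1, …, z_n) with x_j ∈ G and z_j ∈ H_j of χ(x_1 z_1 x_1^{-1} · x_2 z_2 x_2^{-1} ··· x_n z_n x_n^{-1}) equals |G|^n · (∏_{j=1}^n Σ_{z ∈ H_j} χ(z)) / d^{n-1}. -/

import Mathlib

open CategoryTheory
open scoped Classical

noncomputable section

open LinearMap Module

variable {G : Type} [Group G] [Fintype G]

variable {G : Type} [Group G] [Fintype G]

/-- The G-equivariant endomorphism ∑ₓ ρ(x a x⁻¹). -/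
def conjSumHom (V : FDRep ℂ G) (a : G) : V ⟶ V :=
  { hom := InducedCategory.homMk (ModuleCat.ofHom (∑ x : G, V.ρ (x * a * x⁻¹)))
    comm := by
      have h : ∀ g : G, (∑ x : G, V.ρ (x * a * x⁻¹)) * V.ρ g
          = V.ρ g * ∑ x : G, V.ρ (x * a * x⁻¹) := by
        intro g
        rw [Finset.sum_mul, Finset.mul_sum]
        exact Fintype.sum_equiv (Equiv.mulLeft g⁻¹) _ _
          (fun y => by rw [← map_mul, ← map_mul]; simp only [Equiv.coe_mulLeft]; congr 1; group)
      intro g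
      ext v
      exact LinearMap.congr_fun (h g) v }

lemma FDRep.char_one_ne_zero (V : FDRep ℂ G) (hV : Simple V) : V.character 1 ≠ 0 := by
  have hnz : 𝟙 V ≠ 0 := CategoryTheory.id_nonzero V
  have hnt : Nontrivial V := by
    by_contra h
    rw [not_nontrivial_iff_subsingleton] at h
    haveI : Subsingleton ((forget (FGModuleCat ℂ)).obj V.V) := h
    exact hnz (by ext v; exact Subsingleton.elim _ _)
  rw [FDRep.char_one]
  exact_mod_cast (Nat.cast_pos.2 (Module.finrank_pos)).ne'

lemma conj_sum_char (V : FDRep ℂ G) (hV : Simple V) (a b : G) :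
    ∑ x : G, V.character (x * a * x⁻¹ * b)
      = (Fintype.card G : ℂ) * V.character a * V.character b / V.character 1 := by
  obtain ⟨c, hc⟩ := CategoryTheory.endomorphism_simple_eq_smul_id ℂ (conjSumHom V a)
  have key : (c • LinearMap.id : V →ₗ[ℂ] V) = ∑ x : G, V.ρ (x * a * x⁻¹) :=
    congrArg (fun f => f.hom.hom.hom) hc
  have hd := FDRep.char_one_ne_zero V hV
  have htr : c * V.character 1 = (Fintype.card G : ℂ) * V.character a := by
    have h1 := congrArg (LinearMap.trace ℂ V) key
    rw [map_smul, map_sum] at h1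
    have h2 : ∑ x : G, (LinearMap.trace ℂ V) (V.ρ (x * a * x⁻¹))
        = (Fintype.card G : ℂ) * V.character a := by
      have h : ∀ x : G, (LinearMap.trace ℂ V) (V.ρ (x * a * x⁻¹)) = V.character a :=
        fun x => FDRep.char_conj V a x
      rw [Finset.sum_congr rfl fun x _ => h x]
      simp [Finset.sum_const, nsmul_eq_mul]
    have h3 : (LinearMap.trace ℂ V) (LinearMap.id : V →ₗ[ℂ] V) = V.character 1 := by
      have : V.ρ (1 : G) = LinearMap.id := by simp [map_one]; rfl
      rw [FDRep.character, this]
    rw [h2, h3, smul_eq_mul] at h1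
    exact h1
  have hcval : c = (Fintype.card G : ℂ) * V.character a / V.character 1 := by
    rw [eq_div_iff hd]; exact htr
  calc ∑ x : G, V.character (x * a * x⁻¹ * b)
      = LinearMap.trace ℂ V ((∑ x : G, V.ρ (x * a * x⁻¹)) * V.ρ b) := by
        simp [FDRep.character, Finset.sum_mul, map_mul]
    _ = LinearMap.trace ℂ V ((c • LinearMap.id : V →ₗ[ℂ] V) * V.ρ b) := by rw [key]
    _ = c * V.character b := by
        rw [smul_mul_assoc, Module.End.mul_eq_comp, LinearMap.id_comp, map_smul, smul_eq_mul]
        rfl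
    _ = (Fintype.card G : ℂ) * V.character a * V.character b / V.character 1 := by
        rw [hcval]; ring

lemma main_aux (V : FDRep ℂ G) (hV : Simple V) :
    ∀ (n : ℕ), 1 ≤ n → ∀ (H : Fin n → Subgroup G),
    (∑ x : Fin n → G, ∑ z : (∀ j, H j),
        V.character (List.ofFn fun j => x j * (z j : G) * (x j)⁻¹).prod) =
      (Fintype.card G : ℂ) ^ n * (∏ j, ∑ z : H j, V.character (z : G)) /
        V.character 1 ^ (n - 1) := by
  intro n hn
  induction n, hn using Nat.le_induction with
  | base =>
    intro H
    have e : ∀ (x : Fin 1 → G) (z : ∀ j, H j),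
        (List.ofFn fun j => x j * (z j : G) * (x j)⁻¹).prod = x 0 * (z 0 : G) * (x 0)⁻¹ := by
      intro x z; simp [List.ofFn_succ]
    have e2 : ∀ (x : Fin 1 → G),
        (∑ z : ∀ j, H j, V.character ((List.ofFn fun j => x j * (z j : G) * (x j)⁻¹).prod))
          = ∑ w : H 0, V.character (w : G) := by
      intro x
      simp only [e, FDRep.char_conj]
      exact Fintype.sum_equiv (Equiv.piUnique fun j : Fin 1 => ↥(H j)) _ _ (fun z => rfl)
    simp only [e2]
    rw [Finset.sum_const]
    simp [Fin.prod_univ_one, mul_comm]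
  | succ n hn ih =>
    intro H
    have hd : V.character 1 ≠ 0 := FDRep.char_one_ne_zero V hV
    have key : ∀ (a b : G), ∑ x : G, V.character (x * a * x⁻¹ * b)
        = (Fintype.card G : ℂ) * V.character a * V.character b / V.character 1 :=
      conj_sum_char V hV
    have split :
        (∑ x : Fin (n+1) → G, ∑ z : (∀ j, H j),
            V.character (List.ofFn fun j => x j * (z j : G) * (x j)⁻¹).prod)
          = ∑ x0 : G, ∑ xt : Fin n → G, ∑ z0 : H 0, ∑ zt : (∀ j : Fin n, H j.succ),
              V.character ((x0 * (z0 : G) * x0⁻¹) *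
                (List.ofFn fun j => xt j * ((zt j : G)) * (xt j)⁻¹).prod) := by
      rw [← Equiv.sum_comp (Fin.consEquiv fun _ : Fin (n+1) => G)
        (fun x => ∑ z : (∀ j, H j),
          V.character (List.ofFn fun j => x j * (z j : G) * (x j)⁻¹).prod),
        Fintype.sum_prod_type]
      refine Finset.sum_congr rfl fun x0 _ => Finset.sum_congr rfl fun xt _ => ?_
      rw [← Equiv.sum_comp (Fin.consEquiv fun j : Fin (n+1) => ↥(H j))
        (fun z => V.character (List.ofFn fun j =>
          (Fin.consEquiv fun _ : Fin (n+1) => G) (x0, xt) j * (z j : G) *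
            ((Fin.consEquiv fun _ : Fin (n+1) => G) (x0, xt) j)⁻¹).prod),
        Fintype.sum_prod_type]
      refine Finset.sum_congr rfl fun z0 _ => Finset.sum_congr rfl fun zt _ => ?_
      congr 1
      simp [List.ofFn_succ, Fin.consEquiv_apply, Fin.cons_zero, Fin.cons_succ]
    rw [split]
    have swap : (∑ x0 : G, ∑ xt : Fin n → G, ∑ z0 : H 0, ∑ zt : (∀ j : Fin n, H j.succ),
            V.character ((x0 * (z0 : G) * x0⁻¹) *
              (List.ofFn fun j => xt j * ((zt j : G)) * (xt j)⁻¹).prod))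
        = ∑ xt : Fin n → G, ∑ z0 : H 0, ∑ zt : (∀ j : Fin n, H j.succ), ∑ x0 : G,
            V.character ((x0 * (z0 : G) * x0⁻¹) *
              (List.ofFn fun j => xt j * ((zt j : G)) * (xt j)⁻¹).prod) := by
      rw [Finset.sum_comm]
      refine Finset.sum_congr rfl fun xt _ => ?_
      rw [Finset.sum_comm]
      refine Finset.sum_congr rfl fun z0 _ => ?_
      rw [Finset.sum_comm]
    rw [swap]
    simp only [key]
    have pull : ∀ xt : Fin n → G,
        (∑ z0 : H 0, ∑ zt : (∀ j : Fin n, H j.succ),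
          (Fintype.card G : ℂ) * V.character (z0 : G) *
            V.character ((List.ofFn fun j => xt j * ((zt j : G)) * (xt j)⁻¹).prod) /
              V.character 1)
        = ((∑ z0 : H 0, V.character (z0 : G)) * ((Fintype.card G : ℂ) / V.character 1)) *
            ∑ zt : (∀ j : Fin n, H j.succ),
              V.character ((List.ofFn fun j => xt j * ((zt j : G)) * (xt j)⁻¹).prod) := by
      intro xt
      have e1 : ∀ z0 : H 0,
          (∑ zt : (∀ j : Fin n, H j.succ),
            (Fintype.card G : ℂ) * V.character (z0 : G) *
              V.character ((List.ofFn fun j => xt j * ((zt j : G)) * (xt j)⁻¹).prod) /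
                V.character 1)
          = V.character (z0 : G) * (((Fintype.card G : ℂ) / V.character 1) *
              ∑ zt : (∀ j : Fin n, H j.succ),
                V.character ((List.ofFn fun j => xt j * ((zt j : G)) * (xt j)⁻¹).prod)) := by
        intro z0
        rw [Finset.mul_sum, Finset.mul_sum]
        exact Finset.sum_congr rfl fun zt _ => by ring
      rw [Finset.sum_congr rfl (fun z0 _ => e1 z0), ← Finset.sum_mul]
      ring
    simp only [pull]
    rw [← Finset.mul_sum]
    rw [ih (fun j => H j.succ)]
    have hpow : V.character 1 ^ n = V.character 1 ^ (n - 1) * V.character 1 := by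
      conv_lhs => rw [← Nat.sub_add_cancel hn]
      rw [pow_succ]
    rw [Fin.prod_univ_succ, Nat.add_sub_cancel, hpow]
    have hpd : V.character 1 ^ (n - 1) ≠ 0 := pow_ne_zero _ hd
    field_simp
    ring

end

/-- For an irreducible complex character χ of a finite group G with dimension d = χ(e),
subgroups H₁, …, Hₙ of G (n ≥ 1), the sum over all tuples (x₁, …, xₙ, z₁, …, zₙ) with
xⱼ ∈ G, zⱼ ∈ Hⱼ of χ(x₁ z₁ x₁⁻¹ ⋯ xₙ zₙ xₙ⁻¹) equals |G|ⁿ (∏ⱼ Σ_{z ∈ Hⱼ} χ(z)) / d^{n-1}. -/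
theorem character_subgroup_conjugate_product_sum {G : Type} [Group G] [Fintype G]
    (V : FDRep ℂ G) (hV : Simple V) (n : ℕ) (hn : 1 ≤ n) (H : Fin n → Subgroup G) :
    (∑ x : Fin n → G, ∑ z : (∀ j, H j),
        V.character (List.ofFn fun j => x j * (z j : G) * (x j)⁻¹).prod) =
      (Fintype.card G : ℂ) ^ n * (∏ j, ∑ z : H j, V.character (z : G)) /
        V.character 1 ^ ((n : ℤ) - 1) := by
  rw [show ((n : ℤ) - 1) = ((n - 1 : ℕ) : ℤ) by omega, zpow_natCast]
  exact main_aux V hV n hn H
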